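/- Let φ : ℝ × ℝ^d → ℝ be continuous with y₀ ↦ φ(y₀, y) strictly increasing for each y, let x ∈ ℝ and y ∈ ℝ^d, and suppose ξ ∈ ℝ satisfies φ(ξ, y) = x. Then the preintegration of the indicator against the standard normal density equals the normal cdf at ξ: ∫_ℝ ind(x − φ(y₀, y)) ρ(y₀) dy₀ = Φ(ξ), where ind(z) = 1 if z ≥ 0 and 0 otherwise, ρ(t) = e^{−t²/2}/√(2π), and Φ(u) = ∫_{−∞}^{u} ρ(t) dt. -/
import Mathlib

open Real Filter MeasureTheory

/-- The standard normal probability density `ρ(t) = e^{−t²/2}/√(2π)`. -/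
noncomputable def gauss (t : ℝ) : ℝ := Real.exp (-t ^ 2 / 2) / Real.sqrt (2 * Real.pi)

/-- The standard normal cumulative distribution function `Φ(u) = ∫_{−∞}^u ρ(t) dt`. -/
noncomputable def normCdf (u : ℝ) : ℝ := ∫ t in Set.Iic u, gauss t

/-- The indicator `ind(z) = 1` if `z ≥ 0` and `0` otherwise. -/
noncomputable def indf (z : ℝ) : ℝ := if 0 ≤ z then 1 else 0

/-- if `φ` is continuous, strictly increasing in its first variable, and
`φ(ξ,y) = x`, then `∫_ℝ ind(x − φ(y₀,y)) ρ(y₀) dy₀ = Φ(ξ)`. -/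
theorem stmt12 (d : ℕ) (φ : ℝ → (Fin d → ℝ) → ℝ)
    (hcont : Continuous fun p : ℝ × (Fin d → ℝ) => φ p.1 p.2)
    (hmono : ∀ y : Fin d → ℝ, StrictMono fun t : ℝ => φ t y)
    (x : ℝ) (y : Fin d → ℝ) (ξ : ℝ) (hξ : φ ξ y = x) :
    ∫ t : ℝ, indf (x - φ t y) * gauss t = normCdf ξ := by
  have h : ∀ t : ℝ, indf (x - φ t y) * gauss t = Set.indicator (Set.Iic ξ) gauss t := by
    intro t
    have hiff : 0 ≤ x - φ t y ↔ t ≤ ξ := by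
      rw [sub_nonneg, ← hξ]
      exact (hmono y).le_iff_le
    by_cases ht : t ≤ ξ
    · rw [Set.indicator_of_mem (Set.mem_Iic.mpr ht), indf, if_pos (hiff.mpr ht), one_mul]
    · rw [Set.indicator_of_notMem (by simpa using ht), indf, if_neg (fun h0 => ht (hiff.mp h0)), zero_mul]
  simp_rw [h]
  rw [integral_indicator measurableSet_Iic]
  rfl
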